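/- arXiv:1506.09100 — 3 statements merged into one kernel-verified Lean document; each statement's English description precedes it below -/
import Mathlib

section
/- For every basic type tree T representing a displacement sequence D, there exists a basic type tree T' of equal cost representing D such that T' contains at most one shifted node, and any shifted node of T' is the first idx or strc node on every root-to-leaf path (i.e., T' is a nice basic tree). -/
inductive TT : Type where
  | con : ℕ → TT
  | vec : ℕ → ℤ → TT → TT
  | idx : List ℤ → TT → TT
  | strc : List (ℤ × TT) → TT

theorem TT.sizeOf_snd_lt {ps : List (ℤ × TT)} (p : {x // x ∈ ps}) :
    sizeOf (p.1).2 < sizeOf (TT.strc ps) := by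
  obtain ⟨⟨a, b⟩, hp⟩ := p
  have := List.sizeOf_lt_of_mem hp
  simp at this ⊢
  omega

def flatten : TT → List ℤ
  | .con c => (List.range c).map (fun i => (i : ℤ))
  | .vec c d C => (List.range c).flatMap (fun i => (flatten C).map (· + (i : ℤ) * d))
  | .idx I C => I.flatMap (fun s => (flatten C).map (· + s))
  | .strc ps => ps.attach.flatMap (fun p => (flatten p.1.2).map (· + p.1.1))
decreasing_by
  all_goals first
  | exact TT.sizeOf_snd_lt _
  | decreasing_tactic

def cost (kc kv ki ks kl : ℕ) : TT → ℕ
  | .con _ => kc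
  | .vec _ _ C => kv + cost kc kv ki ks kl C
  | .idx I C => ki + I.length * kl + cost kc kv ki ks kl C
  | .strc ps => ks + 2 * ps.length * kl + (ps.attach.map (fun p => cost kc kv ki ks kl p.1.2)).sum
decreasing_by
  all_goals first
  | exact TT.sizeOf_snd_lt _
  | decreasing_tactic

/-- No shifted `idx`/`strc` node anywhere in the tree: every such node has first index 0. -/
def AllUnshifted : TT → Prop
  | .con _ => True
  | .vec _ _ C => AllUnshifted C
  | .idx I C => I.headD 0 = 0 ∧ AllUnshifted C
  | .strc ps => (ps.map Prod.fst).headD 0 = 0 ∧ ∀ p ∈ ps.attach, AllUnshifted p.1.2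
decreasing_by
  all_goals first
  | exact TT.sizeOf_snd_lt _
  | decreasing_tactic

/-- A nice basic tree: at most one shifted node, which must be the first
`idx` or `strc` node on every root-to-leaf path.  Equivalently, every
`idx`/`strc` node strictly below the first `idx`/`strc` node is unshifted. -/
def Nice : TT → Prop
  | .con _ => True
  | .vec _ _ C => Nice C
  | .idx _ C => AllUnshifted C
  | .strc ps => ∀ p ∈ ps.attach, AllUnshifted p.1.2
decreasing_by
  all_goals first
  | exact TT.sizeOf_snd_lt _
  | decreasing_tactic

/-- Shift the first `idx`/`strc` node on each path by `s`. -/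
def shiftT (s : ℤ) : TT → TT
  | .con c => .con c
  | .vec c d C => .vec c d (shiftT s C)
  | .idx I C => .idx (I.map (· + s)) C
  | .strc ps => .strc (ps.map (fun p => (p.1 + s, p.2)))

lemma flatten_strc (l : List (ℤ × TT)) :
    flatten (.strc l) = l.flatMap (fun p => (flatten p.2).map (· + p.1)) := by
  rw [flatten]
  conv_rhs => rw [← List.attach_map_subtype_val l, List.flatMap_map]

lemma cost_strc (kc kv ki ks kl : ℕ) (l : List (ℤ × TT)) :
    cost kc kv ki ks kl (.strc l)
      = ks + 2 * l.length * kl + (l.map (fun p => cost kc kv ki ks kl p.2)).sum := by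
  have h : l.attach.map (fun p => cost kc kv ki ks kl p.1.2)
      = l.map (fun p => cost kc kv ki ks kl p.2) := by
    conv_rhs => rw [← List.attach_map_subtype_val l, List.map_map]
    rfl
  rw [cost, h]

lemma allUnshifted_strc (l : List (ℤ × TT)) :
    AllUnshifted (.strc l) ↔ (l.map Prod.fst).headD 0 = 0 ∧ ∀ p ∈ l, AllUnshifted p.2 := by
  rw [AllUnshifted]
  constructor
  · rintro ⟨h1, h2⟩
    exact ⟨h1, fun p hp => h2 ⟨p, hp⟩ (List.mem_attach _ _)⟩
  · rintro ⟨h1, h2⟩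
    exact ⟨h1, fun p _ => h2 p.1 p.2⟩

lemma nice_strc (l : List (ℤ × TT)) :
    Nice (.strc l) ↔ ∀ p ∈ l, AllUnshifted p.2 := by
  rw [Nice]
  constructor
  · intro h p hp; exact h ⟨p, hp⟩ (List.mem_attach _ _)
  · intro h p _; exact h p.1 p.2

lemma cost_shiftT (kc kv ki ks kl : ℕ) (s : ℤ) (T : TT) :
    cost kc kv ki ks kl (shiftT s T) = cost kc kv ki ks kl T := by
  cases T with
  | con c => rfl
  | vec c d C =>
      rw [shiftT, cost, cost, cost_shiftT kc kv ki ks kl s C]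
  | idx I C =>
      rw [shiftT, cost, cost, List.length_map]
  | strc ps =>
      rw [shiftT, cost_strc, cost_strc, List.length_map, List.map_map]
      rfl
termination_by sizeOf T

lemma nice_shiftT (s : ℤ) (T : TT) (h : AllUnshifted T) : Nice (shiftT s T) := by
  cases T with
  | con c => rw [shiftT, Nice]; trivial
  | vec c d C =>
      rw [AllUnshifted] at h
      rw [shiftT, Nice]
      exact nice_shiftT s C h
  | idx I C =>
      rw [AllUnshifted] at h
      rw [shiftT, Nice]
      exact h.2
  | strc ps =>
      rw [allUnshifted_strc] at h
      rw [shiftT, nice_strc]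
      intro p hp
      obtain ⟨q, hq, rfl⟩ := List.mem_map.1 hp
      exact h.2 q hq
termination_by sizeOf T

def Spec (kc kv ki ks kl : ℕ) (T : TT) : Prop :=
  ∃ s T', AllUnshifted T' ∧ cost kc kv ki ks kl T' = cost kc kv ki ks kl T ∧
    flatten T = (flatten T').map (· + s) ∧ flatten (shiftT s T') = flatten T

lemma exists_qs (kc kv ki ks kl : ℕ) (ps : List (ℤ × TT))
    (h : ∀ p ∈ ps, Spec kc kv ki ks kl p.2) :
    ∃ qs : List (ℤ × TT), qs.length = ps.length ∧ (∀ q ∈ qs, AllUnshifted q.2) ∧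
      (qs.map (fun q => cost kc kv ki ks kl q.2)).sum
        = (ps.map (fun p => cost kc kv ki ks kl p.2)).sum ∧
      qs.flatMap (fun q => (flatten q.2).map (· + q.1))
        = ps.flatMap (fun p => (flatten p.2).map (· + p.1)) := by
  induction ps with
  | nil => exact ⟨[], rfl, by simp, rfl, rfl⟩
  | cons p rest ih =>
      obtain ⟨qs, hlen, hU, hsum, hflat⟩ := ih (fun q hq => h q (List.mem_cons_of_mem _ hq))
      obtain ⟨s, C', hU', hc', hm', -⟩ := h p List.mem_cons_self
      refine ⟨(p.1 + s, C') :: qs, by simp [hlen], ?_, by simp [hsum, hc'], ?_⟩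
      · intro q hq
        rcases List.mem_cons.1 hq with rfl | hq'
        · exact hU'
        · exact hU q hq'
      · simp only [List.flatMap_cons, hflat, hm', List.map_map]
        congr 1
        apply List.map_congr_left
        intro x _
        simp only [Function.comp_apply]
        ring

lemma main (kc kv ki ks kl : ℕ) (T : TT) : Spec kc kv ki ks kl T := by
  cases T with
  | con c =>
      refine ⟨0, .con c, ?_, rfl, by simp, rfl⟩
      rw [AllUnshifted]
      trivial
  | vec c d C =>
      obtain ⟨s, C', hU, hc, hm, hs⟩ := main kc kv ki ks kl C
      refine ⟨s, .vec c d C', ?_, ?_, ?_, ?_⟩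
      · rw [AllUnshifted]; exact hU
      · rw [cost, cost, hc]
      · simp only [flatten, hm, List.map_flatMap, List.map_map]
        congr 1; funext i
        apply List.map_congr_left
        intro x _
        simp only [Function.comp_apply]
        ring
      · rw [shiftT, flatten, flatten, hs]
  | idx I C =>
      obtain ⟨s, C', hU, hc, hm, -⟩ := main kc kv ki ks kl C
      refine ⟨I.headD 0 + s, .idx (I.map (· - I.headD 0)) C', ?_, ?_, ?_, ?_⟩
      · rw [AllUnshifted]
        refine ⟨?_, hU⟩
        cases I <;> simp
      · rw [cost, cost, List.length_map, hc]
      · simp only [flatten, hm, List.map_flatMap, List.flatMap_map, List.map_map]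
        congr 1; funext t
        apply List.map_congr_left
        intro x _
        simp only [Function.comp_apply]
        ring
      · rw [shiftT]
        simp only [flatten, hm, List.flatMap_map, List.map_map]
        congr 1; funext t
        apply List.map_congr_left
        intro x _
        simp only [Function.comp_apply]
        ring
  | strc ps =>
      have hspec : ∀ p ∈ ps, Spec kc kv ki ks kl p.2 := by
        intro p hp
        exact main kc kv ki ks kl p.2
      obtain ⟨qs, hlen, hU, hsum, hflat⟩ := exists_qs kc kv ki ks kl ps hspec
      set a0 := (qs.map Prod.fst).headD 0 with ha0
      refine ⟨a0, .strc (qs.map (fun q => (q.1 - a0, q.2))), ?_, ?_, ?_, ?_⟩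
      · rw [allUnshifted_strc]
        constructor
        · rcases qs with _ | ⟨q, rest⟩ <;> simp [ha0]
        · intro p hp
          obtain ⟨q, hq, rfl⟩ := List.mem_map.1 hp
          exact hU q hq
      · rw [cost_strc, cost_strc, List.length_map, hlen, List.map_map, ← hsum]
        rfl
      · rw [flatten_strc, flatten_strc, ← hflat, List.flatMap_map, List.map_flatMap]
        congr 1; funext q
        simp only [List.map_map]
        apply List.map_congr_left
        intro x _
        simp only [Function.comp_apply]
        ring
      · rw [shiftT, flatten_strc, flatten_strc, ← hflat, List.map_map, List.flatMap_map]
        congr 1; funext q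
        apply List.map_congr_left
        intro x _
        simp only [Function.comp_apply]
        ring
termination_by sizeOf T
decreasing_by
  all_goals first
  | exact TT.sizeOf_snd_lt ⟨p, hp⟩
  | decreasing_tactic

theorem stmt6 (kc kv ki ks kl : ℕ) (D : List ℤ) (T : TT) (hT : flatten T = D) :
    ∃ T' : TT, flatten T' = D ∧ cost kc kv ki ks kl T' = cost kc kv ki ks kl T ∧ Nice T' := by
  obtain ⟨s, T', hU, hc, -, hf⟩ := main kc kv ki ks kl T
  exact ⟨shiftT s T', hf.trans hT, (cost_shiftT kc kv ki ks kl s T').trans hc, nice_shiftT s T' hU⟩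
end

section
/- If C = D[0,q-1] is a strided repetition of length q with stride d in a displacement sequence D of length n (q divides n), then D = flatten(vec(n/q, d, T)) for any basic tree T with flatten(T) = C. -/
/-- The length-`q` prefix of `D` is a repetition: `q` divides `n = D.length` and
for all `1 ≤ i < n/q` and `0 ≤ j < q`, `D[j] - D[0] = D[i*q+j] - D[i*q]`. -/
def IsRepetition (D : List ℤ) (q : ℕ) : Prop :=
  0 < q ∧ q ∣ D.length ∧
    ∀ i j : ℕ, 1 ≤ i → i < D.length / q → j < q →
      D.getD j 0 - D.getD 0 0 = D.getD (i * q + j) 0 - D.getD (i * q) 0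

/-- The length-`q` prefix of `D` is a strided repetition with stride `d`:
a repetition with additionally `D[(i+1)q] - D[iq] = d` for all `0 ≤ i < n/q - 1`. -/
def IsStridedRepetition (D : List ℤ) (q : ℕ) (d : ℤ) : Prop :=
  IsRepetition D q ∧
    ∀ i : ℕ, i < D.length / q - 1 →
      D.getD ((i + 1) * q) 0 - D.getD (i * q) 0 = d


theorem aux_getElem? {α : Type*} (f : ℕ → List α) (q : ℕ) (hq : ∀ i, (f i).length = q)
    (hqpos : 0 < q) :
    ∀ c k, k < c * q → ((List.range c).flatMap f)[k]? = (f (k / q))[k % q]? := by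
  intro c
  induction c with
  | zero => intro k hk; omega
  | succ c ih =>
    intro k hk
    rw [Nat.succ_mul] at hk
    have hlen : ((List.range c).flatMap f).length = c * q := by
      simp only [List.length_flatMap, Function.comp_def]
      rw [List.map_congr_left (g := fun _ => q) (fun x _ => hq x)]
      simp [mul_comm]
    rw [List.range_succ, List.flatMap_append]
    rcases lt_or_ge k (c * q) with h | h
    · rw [List.getElem?_append_left (by omega), ih k h]
    · have hd : k / q = c := Nat.div_eq_of_lt_le (by omega) (by rw [Nat.succ_mul]; omega)
      have hm : k % q = k - c * q := by
        have h1 := Nat.div_add_mod k q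
        rw [hd, Nat.mul_comm] at h1
        omega
      rw [List.getElem?_append_right (by omega)]
      simp [hlen, hd, hm]
theorem stmt11 (D : List ℤ) (q : ℕ) (d : ℤ)
    (hrep : IsStridedRepetition D q d) (T : TT) (hT : flatten T = D.take q) :
    flatten (TT.vec (D.length / q) d T) = D := by
  obtain ⟨⟨hqpos, hdvd, hrep⟩, hstride⟩ := hrep
  rcases Nat.eq_zero_or_pos D.length with h0 | hnpos
  · have : D = [] := List.eq_nil_of_length_eq_zero h0
    subst this
    simp [flatten]
  have hqn : q ≤ D.length := Nat.le_of_dvd hnpos hdvd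
  have hTlen : (flatten T).length = q := by
    rw [hT, List.length_take]; omega
  have key1 : ∀ i, i < D.length / q → D.getD (i * q) 0 = D.getD 0 0 + (i : ℤ) * d := by
    intro i
    induction i with
    | zero => intro _; simp
    | succ i ih =>
      intro hi
      have h1 := hstride i (by omega)
      have h2 := ih (by omega)
      push_cast
      rw [h2] at h1
      linarith
  have key2 : ∀ i j, i < D.length / q → j < q →
      D.getD (i * q + j) 0 = D.getD j 0 + (i : ℤ) * d := by
    intro i j hi hj
    rcases Nat.eq_zero_or_pos i with rfl | hipos
    · simp
    · have h1 := hrep i j hipos hi hj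
      have h2 := key1 i hi
      linarith
  have hmul : D.length / q * q = D.length := Nat.div_mul_cancel hdvd
  have hflat : flatten (TT.vec (D.length / q) d T)
      = (List.range (D.length / q)).flatMap (fun (i : ℕ) => (flatten T).map (· + (i : ℤ) * d)) := by
    rw [flatten]
    simp [List.flatMap_assoc]
  have hlenflat : (flatten (TT.vec (D.length / q) d T)).length = D.length := by
    rw [hflat]
    simp only [List.length_flatMap, Function.comp_def, List.length_map]
    rw [List.map_congr_left (g := fun _ => q) (fun x _ => hTlen)]
    simp
    exact hmul
  apply List.ext_getElem?
  intro k
  show (flatten (TT.vec (D.length / q) d T))[k]? = D[k]?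
  rcases lt_or_ge k D.length with hk | hk
  · rw [hflat, aux_getElem? _ q (fun i => by simp [hTlen]) hqpos _ k (by omega)]
    have hmod : k % q < q := Nat.mod_lt _ hqpos
    have hdiv : k / q < D.length / q := Nat.div_lt_div_of_lt_of_dvd hdvd hk
    rw [List.getElem?_map, hT]
    have hkd : k % q < (D.take q).length := by rw [List.length_take]; omega
    rw [List.getElem?_eq_getElem hkd, List.getElem?_eq_getElem hk]
    simp only [Option.map_some]
    congr 1
    rw [List.getElem_take]
    have hk2 : k = k / q * q + k % q := by
      have h1 := Nat.div_add_mod k q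
      have h2 : q * (k / q) = k / q * q := Nat.mul_comm _ _
      omega
    have hkey := key2 (k / q) (k % q) hdiv hmod
    rw [List.getD_eq_getElem _ _ (by omega), List.getD_eq_getElem _ _ (by omega)] at hkey
    rw [show D[k] = D[k / q * q + k % q]'(by omega) from by congr 1]
    rw [hkey]
  · rw [List.getElem?_eq_none (by omega), List.getElem?_eq_none (by omega)]
end

section
/- In the DAG G with vertices v_0,...,v_n and an edge (v_i,v_j) for each 0 ≤ i < j ≤ n with j − i < n, of weight 2·K_lookup + cost(T_{i,j−1}) where T_{i,j−1} is a cost-optimal basic tree for the normalized segment D̂[i,j−1], the weight of a shortest path from v_0 to v_n equals the minimum cost over all strc-rooted basic tree representations of D̂ (with subtrees taken from the T's), minus K_strc; more precisely: for every path v_0, u_1, ..., u_k, v_n in G, the tree strc(k+1, ⟨D̂[0], D̂[u_1], ..., D̂[u_k]⟩, ⟨T_{0,u_1−1}, ..., T_{u_k,n−1}⟩) represents D̂ and has cost K_strc + (sum of edge weights of the path). -/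
/-- The normalized segment of `D` starting at position `i` with length `l`:
`⟨D[i]-D[i], …, D[i+l-1]-D[i]⟩`. -/
def nsegLen (D : List ℤ) (i l : ℕ) : List ℤ :=
  ((D.drop i).take l).map (· - D.getD i 0)

/-- Concatenation of the segments of `D` cut at consecutive positions of `cs`. -/
def segs (D : List ℤ) : List ℕ → List ℤ
  | a :: b :: rest => (D.drop a).take (b - a) ++ segs D (b :: rest)
  | _ => []

lemma head_le_getLast (cs : List ℕ) (a l : ℕ) (h : cs.Chain' (· < ·))
    (h1 : cs.head? = some a) (h2 : cs.getLast? = some l) : a ≤ l := by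
  induction cs generalizing a with
  | nil => simp at h1
  | cons x xs ih =>
    simp at h1; subst h1
    cases xs with
    | nil => simp at h2; omega
    | cons y ys =>
      simp only [List.Chain', List.isChain_cons_cons] at h
      have := ih h.2 (a := y) rfl (by simpa using h2)
      omega

lemma segs_eq (D : List ℤ) (cs : List ℕ) (a l : ℕ) (h : cs.Chain' (· < ·))
    (h1 : cs.head? = some a) (h2 : cs.getLast? = some l) :
    segs D cs = (D.drop a).take (l - a) := by
  induction cs generalizing a with
  | nil => simp at h1
  | cons x xs ih =>
    rw [List.head?_cons, Option.some_inj] at h1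
    cases xs with
    | nil =>
      simp at h2; subst h2; subst h1; simp [segs]
    | cons b ys =>
      subst h1
      simp only [List.Chain', List.isChain_cons_cons] at h
      have hbl : b ≤ l := head_le_getLast _ b l h.2 rfl (by simpa using h2)
      have hr := ih h.2 (a := b) rfl (by simpa using h2)
      show (D.drop x).take (b - x) ++ segs D (b :: ys) = _
      rw [hr]
      have heq : l - x = (b - x) + (l - b) := by omega
      rw [heq, List.take_add, List.drop_drop]
      have : x + (b - x) = b := by omega
      rw [this]

lemma flatMap_zip_eq_segs (D : List ℤ) (cs : List ℕ) (Ts : List TT)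
    (hlen : Ts.length + 1 = cs.length)
    (hsub : ∀ j : ℕ, (hj : j < Ts.length) →
      flatten (Ts.get ⟨j, hj⟩) = nsegLen D (cs.getD j 0) (cs.getD (j + 1) 0 - cs.getD j 0)) :
    ((cs.dropLast.map (fun u => D.getD u 0)).zip Ts).flatMap
      (fun p => (flatten p.2).map (· + p.1)) = segs D cs := by
  induction Ts generalizing cs with
  | nil =>
    obtain ⟨a, rfl⟩ : ∃ a, cs = [a] := by
      cases cs with
      | nil => simp at hlen
      | cons x xs => cases xs with
        | nil => exact ⟨x, rfl⟩
        | cons y ys => simp at hlen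
    simp [segs]
  | cons T Ts ih =>
    obtain ⟨a, b, rest, rfl⟩ : ∃ a b rest, cs = a :: b :: rest := by
      cases cs with
      | nil => simp at hlen
      | cons x xs => cases xs with
        | nil => simp at hlen
        | cons y ys => exact ⟨x, y, ys, rfl⟩
    have hT : flatten T = nsegLen D a (b - a) := by
      simpa using hsub 0 (by simp)
    have hrec := ih (b :: rest) (by simpa using hlen)
      (fun j hj => by simpa using hsub (j + 1) (by simpa using hj))
    have hd : (a :: b :: rest).dropLast = a :: (b :: rest).dropLast := by
      cases rest <;> rfl
    rw [hd, List.map_cons, List.zip_cons_cons, List.flatMap_cons, hrec, hT]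
    show _ ++ _ = (D.drop a).take (b - a) ++ segs D (b :: rest)
    congr 1
    simp [nsegLen, List.map_map, Function.comp_def, sub_add_cancel]

lemma attach_flatMap {α β : Type*} (l : List α) (g : α → List β) :
    l.attach.flatMap (fun p => g p.1) = l.flatMap g := by
  rw [List.flatMap_def, List.flatMap_def, List.attach_map_val]

theorem stmt16 (kc kv ki ks kl : ℕ) (D : List ℤ) (hnf : D.headD 0 = 0)
    (cs : List ℕ) (Ts : List TT)
    (hchain : cs.Chain' (· < ·))
    (hfirst : cs.head? = some 0)
    (hlast : cs.getLast? = some D.length)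
    (hk : 3 ≤ cs.length)
    (hlen : Ts.length + 1 = cs.length)
    (hsub : ∀ j : ℕ, (hj : j < Ts.length) →
      flatten (Ts.get ⟨j, hj⟩) = nsegLen D (cs.getD j 0) (cs.getD (j + 1) 0 - cs.getD j 0) ∧
      ∀ T' : TT, flatten T' = nsegLen D (cs.getD j 0) (cs.getD (j + 1) 0 - cs.getD j 0) →
        cost kc kv ki ks kl (Ts.get ⟨j, hj⟩) ≤ cost kc kv ki ks kl T') :
    flatten (TT.strc ((cs.dropLast.map (fun u => D.getD u 0)).zip Ts)) = D ∧
    cost kc kv ki ks kl (TT.strc ((cs.dropLast.map (fun u => D.getD u 0)).zip Ts)) =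
      ks + (Ts.map (fun T => 2 * kl + cost kc kv ki ks kl T)).sum := by
  have hLlen : (cs.dropLast.map (fun u => D.getD u 0)).length = Ts.length := by
    simp [List.length_dropLast]; omega
  set ps := (cs.dropLast.map (fun u => D.getD u 0)).zip Ts with hps
  have hpslen : ps.length = Ts.length := by
    rw [hps, List.length_zip, hLlen, min_self]
  constructor
  · rw [flatten, attach_flatMap ps (fun p => (flatten p.2).map (· + p.1)),
      flatMap_zip_eq_segs D cs Ts hlen (fun j hj => (hsub j hj).1),
      segs_eq D cs 0 D.length hchain hfirst hlast]
    simp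
  · rw [cost, List.attach_map_val (l := ps) (f := fun p => cost kc kv ki ks kl p.2)]
    have h2 : ps.map (fun p => cost kc kv ki ks kl p.2) = Ts.map (cost kc kv ki ks kl) := by
      rw [show (fun p : ℤ × TT => cost kc kv ki ks kl p.2) =
        (cost kc kv ki ks kl) ∘ Prod.snd from rfl, ← List.map_map,
        List.map_snd_zip (le_of_eq hLlen.symm)]
    rw [h2, hpslen]
    have h3 : (Ts.map (fun T => 2 * kl + cost kc kv ki ks kl T)).sum =
        Ts.length * (2 * kl) + (Ts.map (cost kc kv ki ks kl)).sum := by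
      induction Ts with
      | nil => simp
      | cons T Ts ih => simp [ih]; ring
    rw [h3]
    ring
end
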